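/- Assume that any of the following conditions holds: (i) 𝒜^∞ ⊆ 𝒳₊ and there exists no scalable arbitrage opportunity; (ii) 𝒫^∞ ⊆ ℝ^N₊, V₁(x) ∈ 𝒳₊ for every x ∈ ℝ^N₊, and there exists no scalable arbitrage opportunity; (iii) 𝒫 is bounded. Then there exists no scalable acceptable deal; moreover, under condition (iii) one has ℒ = {0}. -/

import Mathlib

open Topology Filter Set Pointwise

noncomputable section

/-- The asymptotic cone `C^∞` of a set `C` in a real topological vector space: the set of all
limits `z` of nets `l_α • c_α` with `c_α ∈ C`, `l_α ≥ 0`, `l_α → 0`, expressed via the standard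
neighborhood characterization of net convergence. -/
def asymCone {E : Type*} [AddCommMonoid E] [SMul ℝ E] [TopologicalSpace E] (C : Set E) :
    Set E :=
  {z | ∀ U ∈ 𝓝 z, ∀ ε : ℝ, 0 < ε → ∃ c ∈ C, ∃ l : ℝ, 0 ≤ l ∧ l < ε ∧ l • c ∈ U}

/-- Epigraph of a real-valued function. -/
def epigraph {E : Type*} (f : E → ℝ) : Set (E × ℝ) := {p | f p.1 ≤ p.2}

/-- The risk measure `ρ` associated to `(A, P, V₀, V₁)`, valued in the extended reals
(`sInf ∅ = ⊤`). -/
def riskM {X : Type*} [AddCommMonoid X] {N : ℕ} (A : Set X) (P : Set (Fin N → ℝ))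
    (V₀ : (Fin N → ℝ) → ℝ) (V₁ : (Fin N → ℝ) → X) (Z : X) : EReal :=
  sInf ((fun x => ((V₀ x : ℝ) : EReal)) '' {x | x ∈ P ∧ Z + V₁ x ∈ A})

/-- The set `ℒ = {x ∈ 𝒫^∞ : V₀^∞(x) ≤ 0, V₁(x) ∈ 𝒜^∞}`.  Here `V₀^∞(x) ≤ 0` is expressed as
`(x, 0)` belonging to the asymptotic cone of the epigraph of `V₀`, which is by definition the
epigraph of `V₀^∞`. -/
def Lset {X : Type*} [AddCommMonoid X] [SMul ℝ X] [TopologicalSpace X] {N : ℕ}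
    (A : Set X) (P : Set (Fin N → ℝ)) (V₀ : (Fin N → ℝ) → ℝ) (V₁ : (Fin N → ℝ) → X) :
    Set (Fin N → ℝ) :=
  {x | x ∈ asymCone P ∧ (x, (0 : ℝ)) ∈ asymCone (epigraph V₀) ∧ V₁ x ∈ asymCone A}

/-- Upper semicontinuity of the liquidation rule `V₁` relative to the ordering cone `Xp`:
for every `x` and every neighborhood `U` of `V₁ x` there is a neighborhood `W` of `x` with
`V₁(W) ⊆ U - Xp`. -/
def USCV1 {X : Type*} [AddCommGroup X] [TopologicalSpace X] {N : ℕ}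
    (Xp : Set X) (V₁ : (Fin N → ℝ) → X) : Prop :=
  ∀ x : Fin N → ℝ, ∀ U ∈ 𝓝 (V₁ x), ∃ W ∈ 𝓝 x, ∀ y ∈ W, ∃ u ∈ U, ∃ p ∈ Xp, V₁ y = u - p

/-- There exists no scalable arbitrage opportunity: no `x ∈ 𝒫^∞` with `V₀^∞(x) ≤ 0` and
`V₁(x) ∈ (𝒳₊)^∞`, `V₁(x) ≠ 0`. -/
def NoScalArb {X : Type*} [AddCommGroup X] [Module ℝ X] [TopologicalSpace X] {N : ℕ}
    (Xp : Set X) (P : Set (Fin N → ℝ)) (V₀ : (Fin N → ℝ) → ℝ) (V₁ : (Fin N → ℝ) → X) :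
    Prop :=
  ¬∃ x : Fin N → ℝ, x ∈ asymCone P ∧ (x, (0 : ℝ)) ∈ asymCone (epigraph V₀) ∧
    V₁ x ∈ asymCone Xp ∧ V₁ x ≠ 0

lemma zero_mem_asymCone' {E : Type*} [AddCommMonoid E] [Module ℝ E] [TopologicalSpace E]
    {C : Set E} (hC : C.Nonempty) : (0 : E) ∈ asymCone C := by
  intro U hU ε hε
  obtain ⟨c, hc⟩ := hC
  exact ⟨c, hc, 0, le_refl 0, hε, by simpa using mem_of_mem_nhds hU⟩

lemma mem_asymCone_of_cone' {X : Type*} [AddCommGroup X] [Module ℝ X] [TopologicalSpace X]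
    {Xp : Set X} (hXp : ∀ c : ℝ, 0 ≤ c → ∀ z ∈ Xp, c • z ∈ Xp) {z : X} (hz : z ∈ Xp) :
    z ∈ asymCone Xp := by
  intro U hU ε hε
  refine ⟨(2 / ε) • z, hXp _ (by positivity) z hz, ε / 2, by positivity, by linarith, ?_⟩
  have h : (ε / 2) * (2 / ε) = 1 := by field_simp
  rw [smul_smul, h, one_smul]
  exact mem_of_mem_nhds hU

lemma asymCone_subset_zero_of_bounded' {N : ℕ} {P : Set (Fin N → ℝ)}
    (hP : Bornology.IsBounded P) {z : Fin N → ℝ} (hz : z ∈ asymCone P) : z = 0 := by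
  by_contra hz0
  have hzn : 0 < ‖z‖ := by simpa [norm_pos_iff] using hz0
  obtain ⟨M, hM⟩ := (isBounded_iff_forall_norm_le).1 hP
  set M' : ℝ := max M 0 with hM'
  have hM'0 : 0 ≤ M' := le_max_right _ _
  have hMle : ∀ c ∈ P, ‖c‖ ≤ M' := fun c hc => le_trans (hM c hc) (le_max_left _ _)
  have hε : 0 < ‖z‖ / (2 * (M' + 1)) := by positivity
  obtain ⟨c, hc, l, hl0, hlε, hlc⟩ :=
    hz (Metric.ball z (‖z‖ / 2)) (Metric.ball_mem_nhds z (by positivity)) _ hε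
  have h1 : ‖l • c - z‖ < ‖z‖ / 2 := by
    simpa [dist_eq_norm] using Metric.mem_ball.1 hlc
  have h2 : ‖l • c‖ ≤ l * M' := by
    rw [norm_smul, Real.norm_of_nonneg hl0]
    exact mul_le_mul_of_nonneg_left (hMle c hc) hl0
  have h3 : ‖z‖ ≤ ‖l • c - z‖ + ‖l • c‖ := by
    calc ‖z‖ = ‖(l • c - z) - l • c‖ := by rw [sub_sub_cancel_left, norm_neg]
    _ ≤ ‖l • c - z‖ + ‖l • c‖ := norm_sub_le _ _
  have h4 : l * M' ≤ (‖z‖ / (2 * (M' + 1))) * M' :=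
    mul_le_mul_of_nonneg_right (le_of_lt hlε) hM'0
  have h5 : (‖z‖ / (2 * (M' + 1))) * M' < ‖z‖ / 2 := by
    rw [div_mul_eq_mul_div, div_lt_div_iff₀ (by positivity) (by norm_num)]
    nlinarith
  linarith

theorem stmt19
    {X : Type*} [AddCommGroup X] [Module ℝ X] [TopologicalSpace X]
    [IsTopologicalAddGroup X] [ContinuousSMul ℝ X]
    (Xp : Set X) (hXp_cone : ∀ c : ℝ, 0 ≤ c → ∀ z ∈ Xp, c • z ∈ Xp)
    (hXp_conv : Convex ℝ Xp)
    {N : ℕ} (hN : 1 ≤ N)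
    (P : Set (Fin N → ℝ)) (hP0 : (0 : Fin N → ℝ) ∈ P)
    (V₀ : (Fin N → ℝ) → ℝ) (hV₀0 : V₀ 0 = 0) (hV₀sp : ∀ x, -V₀ (-x) ≤ V₀ x)
    (V₁ : (Fin N → ℝ) → X) (hV₁0 : V₁ 0 = 0) (hV₁sp : ∀ x, -V₁ (-x) - V₁ x ∈ Xp)
    (A : Set X) (hA0 : (0 : X) ∈ A) (hAmono : ∀ a ∈ A, ∀ p ∈ Xp, a + p ∈ A)
    (hcond : (asymCone A ⊆ Xp ∧ NoScalArb Xp P V₀ V₁) ∨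
      ((asymCone P ⊆ {x : Fin N → ℝ | ∀ i, 0 ≤ x i} ∧
        (∀ x : Fin N → ℝ, (∀ i, 0 ≤ x i) → V₁ x ∈ Xp) ∧ NoScalArb Xp P V₀ V₁)) ∨
      Bornology.IsBounded P) :
    (¬∃ x, x ∈ Lset A P V₀ V₁ ∧ V₁ x ≠ 0) ∧
    (Bornology.IsBounded P → Lset A P V₀ V₁ = {0}) := by
  have hL0 : (0 : Fin N → ℝ) ∈ Lset A P V₀ V₁ := by
    refine ⟨zero_mem_asymCone' ⟨0, hP0⟩, ?_, ?_⟩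
    · have h : ((0 : Fin N → ℝ), (0 : ℝ)) = (0 : (Fin N → ℝ) × ℝ) := rfl
      rw [h]
      exact zero_mem_asymCone' ⟨(0, 0), by simp [epigraph, hV₀0]⟩
    · rw [hV₁0]
      exact zero_mem_asymCone' ⟨0, hA0⟩
  have hbdd : Bornology.IsBounded P → Lset A P V₀ V₁ = {0} := by
    intro hPb
    ext x
    simp only [Set.mem_singleton_iff]
    constructor
    · rintro ⟨hxP, -, -⟩
      exact asymCone_subset_zero_of_bounded' hPb hxP
    · rintro rfl; exact hL0
  refine ⟨?_, hbdd⟩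
  rintro ⟨x, ⟨hxP, hxV0, hxA⟩, hx1⟩
  rcases hcond with ⟨hAXp, hNSA⟩ | ⟨hPpos, hV1pos, hNSA⟩ | hPb
  · exact hNSA ⟨x, hxP, hxV0, mem_asymCone_of_cone' hXp_cone (hAXp hxA), hx1⟩
  · exact hNSA ⟨x, hxP, hxV0,
      mem_asymCone_of_cone' hXp_cone (hV1pos x (hPpos hxP)), hx1⟩
  · have hx0 : x = 0 := asymCone_subset_zero_of_bounded' hPb hxP
    exact hx1 (by rw [hx0, hV₁0])
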